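/- The infinite series ∑_{k=0}^∞ (k!·(2k)!/(3k+2)!)·(5k+3)/2^k converges to π/2. -/

import Mathlib

open Filter Finset Real

lemma beta_nat (a b : ℕ) :
    ∫ x in (0:ℝ)..1, x ^ a * (1 - x) ^ b
      = (Nat.factorial a : ℝ) * (Nat.factorial b) / (Nat.factorial (a + b + 1)) := by
  induction b generalizing a with
  | zero =>
    simp only [pow_zero, mul_one, integral_pow, one_pow, Nat.factorial]
    rw [zero_pow (by omega : a + 1 ≠ 0)]
    have hf : (Nat.factorial a : ℝ) ≠ 0 := Nat.cast_ne_zero.mpr (Nat.factorial_ne_zero _)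
    have ha : (a:ℝ) + 1 ≠ 0 := by positivity
    push_cast [Nat.succ_eq_add_one]
    field_simp
    norm_num
  | succ b ih =>
    have key : ∫ x in (0:ℝ)..1,
        (x ^ a * (1 - x) ^ (b + 1) - ((b:ℝ)+1)/((a:ℝ)+1) * (x ^ (a+1) * (1 - x) ^ b)) = 0 := by
      have hderiv : ∀ x ∈ Set.uIcc (0:ℝ) 1,
          HasDerivAt (fun x : ℝ => x ^ (a+1) * (1 - x) ^ (b+1) / ((a:ℝ)+1))
            (x ^ a * (1 - x) ^ (b + 1) - ((b:ℝ)+1)/((a:ℝ)+1) * (x ^ (a+1) * (1 - x) ^ b)) x := by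
        intro x _
        have h1 : HasDerivAt (fun x : ℝ => x ^ (a+1)) (((a:ℝ)+1) * x ^ a) x := by
          simpa using hasDerivAt_pow (a+1) x
        have h2 : HasDerivAt (fun x : ℝ => (1 - x) ^ (b+1))
            (((b:ℝ)+1) * (1 - x) ^ b * (-1)) x := by
          have := ((hasDerivAt_id x).const_sub 1).pow (b+1)
          simpa [Pi.pow_def] using this
        have := (h1.fun_mul h2).div_const ((a:ℝ)+1)
        refine this.congr_deriv ?_
        have ha : (a:ℝ) + 1 ≠ 0 := by positivity
        field_simp
        ring
      have hint : IntervalIntegrable (fun x : ℝ =>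
          x ^ a * (1 - x) ^ (b + 1) - ((b:ℝ)+1)/((a:ℝ)+1) * (x ^ (a+1) * (1 - x) ^ b))
          MeasureTheory.volume 0 1 := by
        apply Continuous.intervalIntegrable
        continuity
      rw [intervalIntegral.integral_eq_sub_of_hasDerivAt hderiv hint]
      norm_num
    have hi1 : IntervalIntegrable (fun x : ℝ => x ^ a * (1 - x) ^ (b+1))
        MeasureTheory.volume 0 1 := by apply Continuous.intervalIntegrable; continuity
    have hi2 : IntervalIntegrable (fun x : ℝ => ((b:ℝ)+1)/((a:ℝ)+1) * (x ^ (a+1) * (1 - x) ^ b))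
        MeasureTheory.volume 0 1 := by apply Continuous.intervalIntegrable; continuity
    rw [intervalIntegral.integral_sub hi1 hi2, sub_eq_zero,
      intervalIntegral.integral_const_mul] at key
    rw [key, ih (a+1)]
    have h1 : a + 1 + b + 1 = a + (b + 1) + 1 := by omega
    rw [h1, Nat.factorial_succ (a + (b+1)), Nat.factorial_succ b, Nat.factorial_succ a]
    have h2 : (Nat.factorial (a + (b+1)) : ℝ) ≠ 0 := Nat.cast_ne_zero.mpr (Nat.factorial_ne_zero _)
    have ha : (a:ℝ) + 1 ≠ 0 := by positivity
    push_cast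
    field_simp

noncomputable def bb (N : ℕ) : ℝ := ∫ x in (0:ℝ)..1, 2 * (x * (1 - x) ^ 2 / 2) ^ N / (x ^ 2 + 1)

lemma bb_integrable (N : ℕ) : IntervalIntegrable
    (fun x : ℝ => 2 * (x * (1 - x) ^ 2 / 2) ^ N / (x ^ 2 + 1)) MeasureTheory.volume 0 1 := by
  apply Continuous.intervalIntegrable
  apply Continuous.div (by continuity) (by continuity)
  intro x; positivity

lemma term_eq (k : ℕ) :
    (Nat.factorial k : ℝ) * (Nat.factorial (2 * k) : ℝ) /
        (Nat.factorial (3 * k + 2) : ℝ) * (5 * (k : ℝ) + 3) / 2 ^ k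
      = bb k - bb (k + 1) := by
  rw [bb, bb, ← intervalIntegral.integral_sub (bb_integrable k) (bb_integrable (k+1))]
  have hpt : ∀ x : ℝ,
      2 * (x * (1 - x) ^ 2 / 2) ^ k / (x ^ 2 + 1)
        - 2 * (x * (1 - x) ^ 2 / 2) ^ (k+1) / (x ^ 2 + 1)
      = (2 * (x ^ k * (1 - x) ^ (2*k)) - x ^ (k+1) * (1 - x) ^ (2*k)) / 2 ^ k := by
    intro x
    have hx : x ^ 2 + 1 ≠ 0 := by positivity
    have h2 : (2:ℝ) ^ k ≠ 0 := by positivity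
    have ht : (x * (1 - x) ^ 2 / 2) ^ k = x ^ k * (1 - x) ^ (2*k) / 2 ^ k := by
      rw [div_pow, mul_pow, ← pow_mul, mul_comm 2 k]
    rw [pow_succ (x * (1 - x) ^ 2 / 2) k, ht]
    field_simp
    ring
  simp_rw [hpt]
  rw [intervalIntegral.integral_div, intervalIntegral.integral_sub
    (by apply Continuous.intervalIntegrable; continuity)
    (by apply Continuous.intervalIntegrable; continuity),
    intervalIntegral.integral_const_mul, beta_nat k (2*k), beta_nat (k+1) (2*k)]
  have e1 : k + 2*k + 1 = 3*k + 1 := by omega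
  have e2 : k + 1 + 2*k + 1 = 3*k + 2 := by omega
  rw [e1, e2]
  have h1 : Nat.factorial (3*k+2) = (3*k+2) * Nat.factorial (3*k+1) := Nat.factorial_succ _
  have h2 : Nat.factorial (3*k+1) = (3*k+1) * Nat.factorial (3*k) := Nat.factorial_succ _
  have h3 : Nat.factorial (k+1) = (k+1) * Nat.factorial k := Nat.factorial_succ _
  have n1 : (Nat.factorial (3*k) : ℝ) ≠ 0 := Nat.cast_ne_zero.mpr (Nat.factorial_ne_zero _)
  have n2 : (3*(k:ℝ)+1) ≠ 0 := by positivity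
  have n3 : (3*(k:ℝ)+2) ≠ 0 := by positivity
  have n4 : (2:ℝ) ^ k ≠ 0 := by positivity
  rw [h1, h2, h3]
  push_cast
  field_simp
  ring

lemma bb_zero : bb 0 = Real.pi / 2 := by
  rw [bb]
  simp only [pow_zero, mul_one]
  have : ∀ x : ℝ, 2 / (x ^ 2 + 1) = 2 * (1 / (1 + x ^ 2)) := by
    intro x; rw [add_comm]; ring
  simp_rw [this]
  rw [intervalIntegral.integral_const_mul, integral_one_div_one_add_sq, Real.arctan_one,
    Real.arctan_zero]
  ring

lemma bb_tendsto : Tendsto bb atTop (nhds 0) := by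
  have hbound : ∀ N : ℕ, ‖bb N‖ ≤ 2 * (2/27) ^ N := by
    intro N
    have := intervalIntegral.norm_integral_le_of_norm_le_const (C := 2 * (2/27) ^ N)
      (f := fun x : ℝ => 2 * (x * (1 - x) ^ 2 / 2) ^ N / (x ^ 2 + 1))
      (a := 0) (b := 1) ?_
    · simpa [bb] using this
    · intro x hx
      rw [Set.uIoc_of_le (by norm_num : (0:ℝ) ≤ 1)] at hx
      obtain ⟨hx0, hx1⟩ := hx
      have ht0 : 0 ≤ x * (1 - x) ^ 2 / 2 := by positivity
      have ht1 : x * (1 - x) ^ 2 / 2 ≤ 2/27 := by nlinarith [sq_nonneg (x - 1/3), sq_nonneg x]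
      have hd : 1 ≤ x ^ 2 + 1 := by nlinarith
      have hnn : 0 ≤ 2 * (x * (1 - x) ^ 2 / 2) ^ N / (x ^ 2 + 1) := by positivity
      rw [Real.norm_eq_abs, abs_of_nonneg hnn]
      have hp : (x * (1 - x) ^ 2 / 2) ^ N ≤ (2/27) ^ N := pow_le_pow_left₀ ht0 ht1 N
      calc 2 * (x * (1 - x) ^ 2 / 2) ^ N / (x ^ 2 + 1)
          ≤ 2 * (x * (1 - x) ^ 2 / 2) ^ N / 1 := by
            apply div_le_div_of_nonneg_left (by positivity) (by norm_num) hd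
        _ = 2 * (x * (1 - x) ^ 2 / 2) ^ N := by ring
        _ ≤ 2 * (2/27) ^ N := by linarith
  have hgeo : Tendsto (fun N : ℕ => 2 * (2/27 : ℝ) ^ N) atTop (nhds 0) := by
    have := tendsto_pow_atTop_nhds_zero_of_lt_one (by norm_num : (0:ℝ) ≤ 2/27)
      (by norm_num : (2/27:ℝ) < 1)
    simpa using this.const_mul 2
  exact squeeze_zero_norm hbound hgeo

theorem stmt7 :
    Tendsto (fun N => ∑ k ∈ range N,
      (Nat.factorial k : ℝ) * (Nat.factorial (2 * k) : ℝ) /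
        (Nat.factorial (3 * k + 2) : ℝ) * (5 * (k : ℝ) + 3) / 2 ^ k)
      atTop (nhds (Real.pi / 2)) := by
  have hsum : ∀ N : ℕ, ∑ k ∈ range N,
      (Nat.factorial k : ℝ) * (Nat.factorial (2 * k) : ℝ) /
        (Nat.factorial (3 * k + 2) : ℝ) * (5 * (k : ℝ) + 3) / 2 ^ k
      = Real.pi / 2 - bb N := by
    intro N
    rw [← bb_zero]
    rw [← Finset.sum_range_sub' bb N]
    exact Finset.sum_congr rfl fun k _ => term_eq k
  simp_rw [hsum]
  have := tendsto_const_nhds (x := Real.pi / 2) (f := atTop (α := ℕ)) |>.sub bb_tendsto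
  simpa using this
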